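/- Let (ψ_I)_{I∈𝒟} be an orthonormal wavelet system indexed by dyadic intervals, f ∈ BMO(ℝ) (with BMO norm characterized by ‖f‖_{BMO}² = sup_Q |Q|^{-1} Σ_{I⊆Q} |⟨f,ψ_I⟩|²), Q an interval, k ∈ ℤ, n ≥ 1. Then Σ_{I⊆Q, I dyadic} |Σ_{J∈I_{k,n}} ⟨f,ψ_J⟩|² ≲ 2^{|k|}(log(n+1) + max(-k,0) + 1) ‖f‖_{BMO}² |Q|, where I_{k,n} is the family of dyadic intervals J with |I| = 2^k|J| and n ≤ rdist(I,J) < n+1. -/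

import Mathlib

/-- Length of a dyadic interval of scale `j`. -/
noncomputable def dLen (j : ℤ) : ℝ := (2 : ℝ) ^ (-j)

/-- The dyadic interval indexed by `p = (j,k)`, namely `2^{-j}[k,k+1]`. -/
noncomputable def dIcc (p : ℤ × ℤ) : Set ℝ :=
  Set.Icc ((p.2 : ℝ) * dLen p.1) (((p.2 : ℝ) + 1) * dLen p.1)

/-- Relative distance `rdist(I,J) = diam(I∪J)/max(|I|,|J|)` between dyadic intervals. -/
noncomputable def dRdist (p q : ℤ × ℤ) : ℝ :=
  (max (((p.2 : ℝ) + 1) * dLen p.1) (((q.2 : ℝ) + 1) * dLen q.1)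
      - min ((p.2 : ℝ) * dLen p.1) ((q.2 : ℝ) * dLen q.1)) / max (dLen p.1) (dLen q.1)


lemma dLen_pos (j : ℤ) : 0 < dLen j := zpow_pos (by norm_num) _

lemma dLen_mono {i j : ℤ} (h : i ≤ j) : dLen j ≤ dLen i :=
  zpow_le_zpow_right₀ one_le_two (by omega)

lemma dLen_mul (i j : ℤ) : dLen i = dLen j * (2:ℝ) ^ (j - i) := by
  rw [dLen, dLen, ← zpow_add₀ (two_ne_zero)]
  congr 1; omega

lemma max_dLen (i j : ℤ) : max (dLen i) (dLen j) = dLen i * (2:ℝ) ^ (max (i - j) 0) := by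
  rcases le_total i j with h | h
  · rw [max_eq_left (dLen_mono h), max_eq_right (by omega), zpow_zero, mul_one]
  · rw [max_eq_right (dLen_mono h), max_eq_left (by omega)]
    exact dLen_mul j i

lemma max_sub_min (a b c d : ℝ) :
    max a b - min c d = max (max (a - c) (a - d)) (max (b - c) (b - d)) := by
  apply le_antisymm
  · rcases max_cases a b with ⟨h1, _⟩ | ⟨h1, _⟩ <;> rcases min_cases c d with ⟨h2, _⟩ | ⟨h2, _⟩ <;>
      rw [h1, h2] <;> simp [le_max_iff]
  · refine max_le (max_le ?_ ?_) (max_le ?_ ?_) <;>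
      exact sub_le_sub (by simp) (by simp)


lemma int_count (s α β : ℝ) (hs : 0 < s) :
    ∃ F : Finset ℤ, (∀ t : ℤ, α < t * s → t * s < β → t ∈ F) ∧
      (F.card : ℝ) ≤ max ((β - α) / s + 1) 0 := by
  refine ⟨Finset.Icc (⌊α / s⌋ + 1) (⌈β / s⌉ - 1), ?_, ?_⟩
  · intro t h1 h2
    rw [Finset.mem_Icc]
    constructor
    · rw [Int.add_one_le_iff, Int.floor_lt]
      exact (div_lt_iff₀ hs).mpr (by linarith)
    · rw [Int.le_sub_one_iff, Int.lt_ceil]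
      exact (lt_div_iff₀ hs).mpr (by linarith)
  · rw [Int.card_Icc]
    set x : ℤ := ⌈β / s⌉ - 1 + 1 - (⌊α / s⌋ + 1) with hx
    rcases le_or_gt x 0 with h | h
    · rw [Int.toNat_of_nonpos h]
      simp [le_max_iff]
    · have hcast : ((x.toNat : ℕ) : ℝ) = (x : ℝ) := by exact_mod_cast Int.toNat_of_nonneg h.le
      rw [hcast, hx]
      push_cast
      have h1 : (⌈β / s⌉ : ℝ) ≤ β / s + 1 := by
        have h0 : ((⌈β / s⌉ : ℤ) : ℝ) ≤ ((⌊β / s⌋ + 1 : ℤ) : ℝ) := by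
          exact_mod_cast Int.ceil_le_floor_add_one (β / s)
        have h2 := Int.floor_le (β / s)
        push_cast at h0
        linarith
      have h2 : α / s - 1 ≤ (⌊α / s⌋ : ℝ) := by linarith [Int.sub_one_lt_floor (α / s)]
      have h3 : (β - α) / s = β / s - α / s := by ring
      rw [le_max_iff]; left; linarith

lemma core_count (n : ℕ) (hn : 1 ≤ n) (s M c₁ c₂ : ℝ) (hs : 0 < s) (hsM : s ≤ M)
    (hc₂ : c₂ ≤ c₁) (hcM : c₁ - c₂ ≤ M) :
    ∃ G : Finset ℤ,
      (∀ t : ℤ, (n : ℝ) * M ≤ max M (max (c₁ - t * s) (t * s + s - c₂)) →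
        max M (max (c₁ - t * s) (t * s + s - c₂)) < ((n : ℝ) + 1) * M → t ∈ G) ∧
      (G.card : ℝ) ≤ 6 * (M / s) := by
  have hM : 0 < M := hs.trans_le hsM
  have hMs : (1:ℝ) ≤ M / s := (one_le_div hs).mpr hsM
  have key : ∀ x c : ℝ, x ≤ c * M - s → 0 ≤ c → max (x / s + 1) 0 ≤ c * (M / s) := by
    intro x c hx hc
    apply max_le _ (by positivity)
    have h1 : x / s ≤ (c * M - s) / s := by gcongr
    have h2 : (c * M - s) / s = c * (M / s) - 1 := by
      field_simp
    linarith
  rcases eq_or_lt_of_le hn with h1 | h2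
  · -- n = 1
    obtain ⟨F, hF, hcard⟩ := int_count s (c₁ - 2 * M) (c₂ + 2 * M - s) hs
    refine ⟨F, ?_, ?_⟩
    · intro t hlo hhi
      rw [← h1] at hhi; push_cast at hhi
      have e1 : c₁ - t * s ≤ max M (max (c₁ - t * s) (t * s + s - c₂)) := by
        simp [le_max_iff]
      have e2 : t * s + s - c₂ ≤ max M (max (c₁ - t * s) (t * s + s - c₂)) := by
        simp [le_max_iff]
      exact hF t (by linarith) (by linarith)
    · refine hcard.trans ?_
      have : c₂ + 2 * M - s - (c₁ - 2 * M) ≤ 4 * M - s := by linarith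
      calc max ((c₂ + 2 * M - s - (c₁ - 2 * M)) / s + 1) 0 ≤ 4 * (M / s) :=
            key _ 4 this (by norm_num)
      _ ≤ 6 * (M / s) := by nlinarith
  · -- 2 ≤ n
    have h2 : (2 : ℝ) ≤ n := by exact_mod_cast h2
    obtain ⟨F1, hF1, hcard1⟩ := int_count s (c₁ - ((n:ℝ) + 1) * M) (c₁ - (n:ℝ) * M + s) hs
    obtain ⟨F2, hF2, hcard2⟩ := int_count s (c₂ + (n:ℝ) * M - 2 * s) (c₂ + ((n:ℝ) + 1) * M - s) hs
    refine ⟨F1 ∪ F2, ?_, ?_⟩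
    · intro t hlo hhi
      have hAB : M ≤ max (c₁ - t * s) (t * s + s - c₂) := by
        rcases le_max_iff.mp hlo with h | h
        · nlinarith
        · nlinarith [le_max_left (c₁ - (t:ℝ) * s) ((t:ℝ) * s + s - c₂),
            le_max_right (c₁ - (t:ℝ) * s) ((t:ℝ) * s + s - c₂)]
      have e0 : max M (max (c₁ - t * s) (t * s + s - c₂)) = max (c₁ - t * s) (t * s + s - c₂) :=
        max_eq_right hAB
      rw [e0] at hlo hhi
      have hA : c₁ - t * s < ((n:ℝ) + 1) * M := (le_max_left _ _).trans_lt hhi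
      have hB : t * s + s - c₂ < ((n:ℝ) + 1) * M := (le_max_right _ _).trans_lt hhi
      rw [Finset.mem_union]
      rcases le_max_iff.mp hlo with h | h
      · exact Or.inl (hF1 t (by linarith) (by linarith))
      · exact Or.inr (hF2 t (by linarith) (by linarith))
    · calc ((F1 ∪ F2).card : ℝ) ≤ (F1.card : ℝ) + F2.card := by
            exact_mod_cast Finset.card_union_le F1 F2
      _ ≤ 3 * (M / s) + 3 * (M / s) := by
            refine add_le_add (hcard1.trans (key _ 3 (by linarith) (by norm_num)))
              (hcard2.trans (key _ 3 (by linarith) (by norm_num)))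
      _ ≤ 6 * (M / s) := by linarith

lemma dRdist_eq (p q : ℤ × ℤ) :
    dRdist p q = max (max (dLen p.1) (dLen q.1))
        (max (((p.2 : ℝ) + 1) * dLen p.1 - (q.2 : ℝ) * dLen q.1)
          (((q.2 : ℝ) + 1) * dLen q.1 - (p.2 : ℝ) * dLen p.1))
      / max (dLen p.1) (dLen q.1) := by
  rw [dRdist, max_sub_min]
  congr 1
  have e1 : ((p.2 : ℝ) + 1) * dLen p.1 - (p.2 : ℝ) * dLen p.1 = dLen p.1 := by ring
  have e2 : ((q.2 : ℝ) + 1) * dLen q.1 - (q.2 : ℝ) * dLen q.1 = dLen q.1 := by ring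
  rw [e1, e2, max_comm (((q.2 : ℝ) + 1) * dLen q.1 - (p.2 : ℝ) * dLen p.1) (dLen q.1),
    max_max_max_comm]

lemma tsum_subtype_eq {α : Type*} (f : α → ℝ) (P : α → Prop) (F : Finset α)
    (h : ∀ x, P x ↔ x ∈ F) : ∑' (x : {x // P x}), f ↑x = ∑ x ∈ F, f x := by
  rw [← Finset.tsum_subtype F f]
  exact (Equiv.subtypeEquivRight (fun x => h x)).tsum_eq (fun x : {x // x ∈ F} => f ↑x)

lemma logb_two_zpow (z : ℤ) : Real.logb 2 ((2:ℝ) ^ z) = z := by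
  have h := Real.log_pos one_lt_two
  rw [Real.logb, Real.log_zpow]
  field_simp

set_option maxHeartbeats 1000000 in
/-- Wavelet coefficient form of the key martingale transform estimate: if the coefficients
`a` of `f` satisfy the BMO condition with constant `B`, then for every interval `Q = [u,v]`,
`Σ_{I ⊆ Q} |Σ_{J ∈ I_{k,n}} a_J|² ≲ 2^{|k|}(log₂(n+1) + max(-k,0) + 1) B² |Q|`,
with an absolute implicit constant. -/
theorem stmt5 :
    ∃ C : ℝ, 0 < C ∧
      ∀ (a : ℤ × ℤ → ℝ) (B : ℝ) (k : ℤ) (n : ℕ), 1 ≤ n → 0 ≤ B →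
        (∀ u v : ℝ, u < v →
          ∑' p : {p : ℤ × ℤ // dIcc p ⊆ Set.Icc u v}, ENNReal.ofReal ((a p.1) ^ 2)
            ≤ ENNReal.ofReal (B ^ 2 * (v - u))) →
        ∀ u v : ℝ, u < v →
          ∑' p : {p : ℤ × ℤ // dIcc p ⊆ Set.Icc u v},
              ENNReal.ofReal
                ((∑' q : {q : ℤ × ℤ // q.1 = p.1.1 + k ∧ (n : ℝ) ≤ dRdist p.1 q ∧
                    dRdist p.1 q < (n : ℝ) + 1}, a q) ^ 2)
            ≤ ENNReal.ofReal
                (C * (2 : ℝ) ^ |k| * (Real.logb 2 ((n : ℝ) + 1) + ((max (-k) 0 : ℤ) : ℝ) + 1)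
                  * B ^ 2 * (v - u)) := by
  classical
  refine ⟨1000, by norm_num, ?_⟩
  intro a B k n hn hB hyp u v huv
  have hvu : 0 < v - u := by linarith
  have hn1 : (1:ℝ) ≤ (n:ℝ) := by exact_mod_cast hn
  set Y : ℝ := Real.logb 2 ((n : ℝ) + 1) + ((max (-k) 0 : ℤ) : ℝ) with hY_def
  have hmx : (0:ℝ) ≤ ((max (-k) 0 : ℤ) : ℝ) := by exact_mod_cast le_max_right (-k) (0:ℤ)
  have hY : 0 ≤ Y := by
    have h0 : (0:ℝ) ≤ Real.logb 2 ((n:ℝ)+1) := Real.logb_nonneg one_lt_two (by linarith)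
    rw [hY_def]; linarith
  set m2 : ℝ := (2:ℝ) ^ (max (-k) 0 : ℤ) with hm2_def
  have hm2 : 0 < m2 := zpow_pos (by norm_num) _
  set t0 : ℝ := (v - u) / (((n:ℝ) + 1) * m2) with ht0_def
  have ht0 : 0 < t0 := by rw [ht0_def]; positivity
  set j₀ : ℤ := -⌊Real.logb 2 t0⌋ with hj₀_def
  set j₁ : ℤ := ⌈-Real.logb 2 (v - u)⌉ with hj₁_def
  -- threshold scale properties
  have h_j₀ : ∀ j : ℤ, j₀ ≤ j → ((n:ℝ) + 1) * m2 * dLen j ≤ v - u := by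
    intro j hj
    have h1 : dLen j ≤ dLen j₀ := dLen_mono hj
    have h2 : dLen j₀ ≤ t0 := by
      have e1 : dLen j₀ = (2:ℝ) ^ ((⌊Real.logb 2 t0⌋ : ℤ)) := by
        rw [dLen, hj₀_def, neg_neg]
      calc dLen j₀ = (2:ℝ) ^ ((⌊Real.logb 2 t0⌋ : ℝ)) := by
            rw [e1, Real.rpow_intCast]
      _ ≤ (2:ℝ) ^ (Real.logb 2 t0) :=
            Real.rpow_le_rpow_of_exponent_le one_le_two (Int.floor_le _)
      _ = t0 := Real.rpow_logb two_pos (by norm_num) ht0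
    have h3 : ((n:ℝ) + 1) * m2 * dLen j ≤ ((n:ℝ) + 1) * m2 * t0 :=
      mul_le_mul_of_nonneg_left (h1.trans h2) (by positivity)
    calc ((n:ℝ) + 1) * m2 * dLen j ≤ ((n:ℝ) + 1) * m2 * t0 := h3
    _ = v - u := by rw [ht0_def]; field_simp
  have h_j₁ : ∀ j : ℤ, dLen j ≤ v - u → j₁ ≤ j := by
    intro j hj
    have e1 : dLen j = (2:ℝ) ^ ((-j : ℝ)) := by
      rw [dLen, ← Real.rpow_intCast 2 (-j)]; push_cast; ring_nf
    have e2 : v - u = (2:ℝ) ^ (Real.logb 2 (v - u)) :=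
      (Real.rpow_logb two_pos (by norm_num) hvu).symm
    rw [e1, e2] at hj
    have h3 : -(j:ℝ) ≤ Real.logb 2 (v - u) := by
      have := (Real.rpow_le_rpow_left_iff one_lt_two).mp hj
      linarith
    rw [hj₁_def]
    exact Int.ceil_le.mpr (by push_cast; linarith)
  have h_scales : (((j₀ - j₁).toNat : ℕ) : ℝ) ≤ Y + 1 := by
    have hlog : Real.logb 2 t0 = Real.logb 2 (v - u) - Y := by
      rw [ht0_def, Real.logb_div hvu.ne' (by positivity),
        Real.logb_mul (by positivity) hm2.ne', hm2_def, logb_two_zpow, hY_def]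
    have hj₀' : j₀ = -⌊Real.logb 2 (v - u) - Y⌋ := by rw [hj₀_def, hlog]
    have h1 : (j₀ : ℝ) ≤ -(Real.logb 2 (v - u) - Y) + 1 := by
      have h2 := Int.sub_one_lt_floor (Real.logb 2 (v - u) - Y)
      rw [hj₀']; push_cast; linarith
    have h2 : -Real.logb 2 (v - u) ≤ (j₁ : ℝ) := by rw [hj₁_def]; exact Int.le_ceil _
    rcases le_or_gt (j₀ - j₁) 0 with h | h
    · rw [Int.toNat_of_nonpos h]; push_cast; linarith
    · have : (((j₀ - j₁).toNat : ℕ) : ℝ) = ((j₀ - j₁ : ℤ) : ℝ) := by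
        exact_mod_cast Int.toNat_of_nonneg h.le
      rw [this]; push_cast; linarith
  -- endpoints of dyadic intervals inside an interval
  have hsub : ∀ (w z : ℝ) (p : ℤ × ℤ), dIcc p ⊆ Set.Icc w z →
      w ≤ (p.2 : ℝ) * dLen p.1 ∧ ((p.2 : ℝ) + 1) * dLen p.1 ≤ z := by
    intro w z p hp
    have h0 := dLen_pos p.1
    have hle : (p.2 : ℝ) * dLen p.1 ≤ ((p.2 : ℝ) + 1) * dLen p.1 := by nlinarith
    have h1 := hp (Set.mem_Icc.mpr ⟨le_refl _, hle⟩)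
    have h2 := hp (Set.mem_Icc.mpr ⟨hle, le_refl _⟩)
    exact ⟨(Set.mem_Icc.mp h1).1, (Set.mem_Icc.mp h2).2⟩
  -- single coefficient bound
  have hsingle : ∀ q : ℤ × ℤ, a q ^ 2 ≤ B ^ 2 * dLen q.1 := by
    intro q
    have hl := dLen_pos q.1
    have h1 : dIcc q ⊆ Set.Icc ((q.2 : ℝ) * dLen q.1) ((q.2 : ℝ) * dLen q.1 + dLen q.1) := by
      rw [dIcc]
      exact Set.Icc_subset_Icc le_rfl (by nlinarith)
    have h2 := hyp ((q.2 : ℝ) * dLen q.1) ((q.2 : ℝ) * dLen q.1 + dLen q.1) (by linarith)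
    have h3 := (ENNReal.le_tsum
      (⟨q, h1⟩ : {p : ℤ × ℤ // dIcc p ⊆
        Set.Icc ((q.2 : ℝ) * dLen q.1) ((q.2 : ℝ) * dLen q.1 + dLen q.1)})).trans h2
    rw [ENNReal.ofReal_le_ofReal_iff (by nlinarith)] at h3
    calc a q ^ 2 ≤ B ^ 2 * ((q.2 : ℝ) * dLen q.1 + dLen q.1 - (q.2 : ℝ) * dLen q.1) := h3
    _ = B ^ 2 * dLen q.1 := by ring
  -- rdist conditions in "core" form
  have hdiam : ∀ p q : ℤ × ℤ, (n : ℝ) ≤ dRdist p q → dRdist p q < (n : ℝ) + 1 →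
      (n : ℝ) * max (dLen p.1) (dLen q.1) ≤
        max (max (dLen p.1) (dLen q.1))
          (max (((p.2 : ℝ) + 1) * dLen p.1 - (q.2 : ℝ) * dLen q.1)
            (((q.2 : ℝ) + 1) * dLen q.1 - (p.2 : ℝ) * dLen p.1)) ∧
      max (max (dLen p.1) (dLen q.1))
          (max (((p.2 : ℝ) + 1) * dLen p.1 - (q.2 : ℝ) * dLen q.1)
            (((q.2 : ℝ) + 1) * dLen q.1 - (p.2 : ℝ) * dLen p.1)) <
        ((n : ℝ) + 1) * max (dLen p.1) (dLen q.1) := by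
    intro p q h2 h3
    have hM : 0 < max (dLen p.1) (dLen q.1) := lt_max_of_lt_left (dLen_pos p.1)
    rw [dRdist_eq] at h2 h3
    exact ⟨(le_div_iff₀ hM).mp h2, (div_lt_iff₀ hM).mp h3⟩
  -- counting lemma for the inner family
  have hA : ∀ p : ℤ × ℤ, ∃ G : Finset ℤ,
      (∀ q : ℤ × ℤ, q.1 = p.1 + k → (n : ℝ) ≤ dRdist p q → dRdist p q < (n : ℝ) + 1 →
        q.2 ∈ G) ∧ (G.card : ℝ) ≤ 6 * (2:ℝ) ^ (max k 0 : ℤ) := by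
    intro p
    have hL := dLen_pos p.1
    have hs := dLen_pos (p.1 + k)
    have hcM : ((p.2 : ℝ) + 1) * dLen p.1 - (p.2 : ℝ) * dLen p.1 = dLen p.1 := by ring
    obtain ⟨G, hG, hGcard⟩ := core_count n hn (dLen (p.1 + k))
      (max (dLen p.1) (dLen (p.1 + k)))
      (((p.2 : ℝ) + 1) * dLen p.1) ((p.2 : ℝ) * dLen p.1) hs (le_max_right _ _)
      (by nlinarith) (by rw [hcM]; exact le_max_left _ _)
    refine ⟨G, ?_, ?_⟩
    · intro q hq1 hq2 hq3
      obtain ⟨hd1, hd2⟩ := hdiam p q hq2 hq3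
      rw [hq1] at hd1 hd2
      have e : ((q.2 : ℝ) + 1) * dLen (p.1 + k) - (p.2 : ℝ) * dLen p.1 =
          (q.2 : ℝ) * dLen (p.1 + k) + dLen (p.1 + k) - (p.2 : ℝ) * dLen p.1 := by ring
      rw [e] at hd1 hd2
      exact hG q.2 hd1 hd2
    · refine hGcard.trans ?_
      have e : max (dLen p.1) (dLen (p.1 + k)) =
          dLen (p.1 + k) * (2:ℝ) ^ (max k 0 : ℤ) := by
        rw [max_comm, max_dLen (p.1 + k) p.1]
        congr 2
        omega
      rw [e, mul_comm (dLen (p.1 + k)) ((2:ℝ) ^ (max k 0 : ℤ)), mul_div_assoc,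
        div_self hs.ne', mul_one]
  -- counting lemma for the multiplicity
  have hMult : ∀ q : ℤ × ℤ, ∃ G : Finset ℤ,
      (∀ p : ℤ × ℤ, q.1 = p.1 + k → (n : ℝ) ≤ dRdist p q → dRdist p q < (n : ℝ) + 1 →
        p.2 ∈ G) ∧ (G.card : ℝ) ≤ 6 * (2:ℝ) ^ (max (-k) 0 : ℤ) := by
    intro q
    have hL := dLen_pos (q.1 - k)
    have hl := dLen_pos q.1
    have hcM : ((q.2 : ℝ) + 1) * dLen q.1 - (q.2 : ℝ) * dLen q.1 = dLen q.1 := by ring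
    obtain ⟨G, hG, hGcard⟩ := core_count n hn (dLen (q.1 - k))
      (max (dLen (q.1 - k)) (dLen q.1))
      (((q.2 : ℝ) + 1) * dLen q.1) ((q.2 : ℝ) * dLen q.1) hL (le_max_left _ _)
      (by nlinarith) (by rw [hcM]; exact le_max_right _ _)
    refine ⟨G, ?_, ?_⟩
    · intro p hq1 hq2 hq3
      obtain ⟨hd1, hd2⟩ := hdiam p q hq2 hq3
      have hp1 : p.1 = q.1 - k := by omega
      rw [hp1] at hd1 hd2
      have e : ((p.2 : ℝ) + 1) * dLen (q.1 - k) - (q.2 : ℝ) * dLen q.1 =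
          (p.2 : ℝ) * dLen (q.1 - k) + dLen (q.1 - k) - (q.2 : ℝ) * dLen q.1 := by ring
      rw [e, max_comm ((p.2 : ℝ) * dLen (q.1 - k) + dLen (q.1 - k) - (q.2 : ℝ) * dLen q.1)
        (((q.2 : ℝ) + 1) * dLen q.1 - (p.2 : ℝ) * dLen (q.1 - k))] at hd1 hd2
      exact hG p.2 hd1 hd2
    · refine hGcard.trans ?_
      have e : max (dLen (q.1 - k)) (dLen q.1) =
          dLen (q.1 - k) * (2:ℝ) ^ (max (-k) 0 : ℤ) := by
        rw [max_dLen (q.1 - k) q.1]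
        congr 2
        omega
      rw [e, mul_comm (dLen (q.1 - k)) ((2:ℝ) ^ (max (-k) 0 : ℤ)), mul_div_assoc,
        div_self hL.ne', mul_one]
  choose Gq hGq1 hGq2 using hA
  choose Gm hGm1 hGm2 using hMult
  -- the finite inner family
  set Fq : ℤ × ℤ → Finset (ℤ × ℤ) := fun p =>
    ((Gq p).image (fun m' => (p.1 + k, m'))).filter
      (fun q => q.1 = p.1 + k ∧ (n : ℝ) ≤ dRdist p q ∧ dRdist p q < (n : ℝ) + 1) with hFq_def
  have hFq_iff : ∀ p q : ℤ × ℤ,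
      (q.1 = p.1 + k ∧ (n : ℝ) ≤ dRdist p q ∧ dRdist p q < (n : ℝ) + 1) ↔ q ∈ Fq p := by
    intro p q
    rw [hFq_def]
    simp only [Finset.mem_filter, Finset.mem_image]
    constructor
    · rintro ⟨h1, h2, h3⟩
      exact ⟨⟨q.2, hGq1 p q h1 h2 h3, by rw [← h1]⟩, h1, h2, h3⟩
    · rintro ⟨-, h⟩
      exact h
  have hFq_card : ∀ p : ℤ × ℤ, ((Fq p).card : ℝ) ≤ 6 * (2:ℝ) ^ (max k 0 : ℤ) := by
    intro p
    refine le_trans ?_ (hGq2 p)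
    have := (Finset.card_filter_le ((Gq p).image (fun m' => (p.1 + k, m')))
      (fun q => q.1 = p.1 + k ∧ (n : ℝ) ≤ dRdist p q ∧ dRdist p q < (n : ℝ) + 1)).trans
      (Finset.card_image_le)
    rw [hFq_def]
    exact_mod_cast this
  have hFq_fst : ∀ p q : ℤ × ℤ, q ∈ Fq p → q.1 = p.1 + k := by
    intro p q hq
    exact ((hFq_iff p q).mpr hq).1
  -- geometric localization lemma
  have hG1 : ∀ p q : ℤ × ℤ, j₀ ≤ p.1 → dIcc p ⊆ Set.Icc u v → q ∈ Fq p →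
      dIcc q ⊆ Set.Icc (2*u - v) (2*v - u) := by
    intro p q hj hp hq
    obtain ⟨hq1, hq2, hq3⟩ := (hFq_iff p q).mpr hq
    have hM : 0 < max (dLen p.1) (dLen q.1) := lt_max_of_lt_left (dLen_pos p.1)
    have hnum : max (((p.2:ℝ)+1) * dLen p.1) (((q.2:ℝ)+1) * dLen q.1)
        - min ((p.2:ℝ) * dLen p.1) ((q.2:ℝ) * dLen q.1)
        < ((n:ℝ)+1) * max (dLen p.1) (dLen q.1) := by
      rw [dRdist] at hq3
      exact (div_lt_iff₀ hM).mp hq3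
    have hMeq : max (dLen p.1) (dLen q.1) = dLen p.1 * m2 := by
      rw [hq1, max_dLen p.1 (p.1 + k), hm2_def]
      congr 2
      omega
    have hle : ((n:ℝ)+1) * max (dLen p.1) (dLen q.1) ≤ v - u := by
      rw [hMeq]
      have h := h_j₀ p.1 hj
      calc ((n:ℝ)+1) * (dLen p.1 * m2) = ((n:ℝ)+1) * m2 * dLen p.1 := by ring
      _ ≤ v - u := h
    obtain ⟨hu1, hv1⟩ := hsub u v p hp
    have hL := dLen_pos p.1
    have hstep : (p.2:ℝ) * dLen p.1 ≤ ((p.2:ℝ)+1) * dLen p.1 := by nlinarith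
    have hmin1 : min ((p.2:ℝ) * dLen p.1) ((q.2:ℝ) * dLen q.1) ≤ (p.2:ℝ) * dLen p.1 :=
      min_le_left _ _
    have hmin2 : min ((p.2:ℝ) * dLen p.1) ((q.2:ℝ) * dLen q.1) ≤ (q.2:ℝ) * dLen q.1 :=
      min_le_right _ _
    have hmax1 : ((p.2:ℝ)+1) * dLen p.1 ≤
        max (((p.2:ℝ)+1) * dLen p.1) (((q.2:ℝ)+1) * dLen q.1) := le_max_left _ _
    have hmax2 : ((q.2:ℝ)+1) * dLen q.1 ≤
        max (((p.2:ℝ)+1) * dLen p.1) (((q.2:ℝ)+1) * dLen q.1) := le_max_right _ _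
    rw [dIcc]
    exact Set.Icc_subset_Icc (by linarith) (by linarith)
  -- inner tsum as a finite sum
  have hinner : ∀ p : ℤ × ℤ,
      (∑' q : {q : ℤ × ℤ // q.1 = p.1 + k ∧ (n : ℝ) ≤ dRdist p q ∧ dRdist p q < (n : ℝ) + 1},
        a ↑q) = ∑ q ∈ Fq p, a q :=
    fun p => tsum_subtype_eq a _ (Fq p) (hFq_iff p)
  -- main objects for the two regimes
  set U : Set (ℤ × ℤ) := {q | dIcc q ⊆ Set.Icc (2*u - v) (2*v - u)} with hU_def
  set Φ : ℤ × ℤ → ℤ × ℤ → ENNReal := fun p q =>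
    if (j₀ ≤ p.1 ∧ dIcc p ⊆ Set.Icc u v ∧ q ∈ Fq p) then ENNReal.ofReal (a q ^ 2) else 0
    with hΦ_def
  set Nb : ENNReal := ENNReal.ofReal (6 * (2:ℝ) ^ (max k 0 : ℤ)) with hNb_def
  set Mb : ENNReal := ENNReal.ofReal (6 * (2:ℝ) ^ (max (-k) 0 : ℤ)) with hMb_def
  set Hf : ℤ × ℤ → ENNReal := fun p =>
    if (p.1 < j₀ ∧ dIcc p ⊆ Set.Icc u v) then
      ENNReal.ofReal (36 * (2:ℝ) ^ (|k| : ℤ) * B^2 * dLen p.1) else 0 with hHf_def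
  -- small-scale termwise bound
  have hsmall_term : ∀ p : {p : ℤ × ℤ // dIcc p ⊆ Set.Icc u v},
      (if j₀ ≤ p.1.1 then ENNReal.ofReal ((∑ q ∈ Fq p.1, a q)^2) else 0)
        ≤ Nb * ∑' q : ℤ × ℤ, Φ p.1 q := by
    intro p
    by_cases hj : j₀ ≤ p.1.1
    · rw [if_pos hj]
      have h1 : ∑' q : ℤ × ℤ, Φ p.1 q = ∑ q ∈ Fq p.1, ENNReal.ofReal (a q ^ 2) := by
        rw [tsum_eq_sum (s := Fq p.1) (fun q hq => by
          simp only [hΦ_def]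
          exact if_neg (fun h => hq h.2.2))]
        exact Finset.sum_congr rfl (fun q hq => by
          simp only [hΦ_def]
          exact if_pos ⟨hj, p.2, hq⟩)
      rw [h1, ← ENNReal.ofReal_sum_of_nonneg (fun q _ => sq_nonneg (a q)), hNb_def,
        ← ENNReal.ofReal_mul (by positivity)]
      apply ENNReal.ofReal_le_ofReal
      calc (∑ q ∈ Fq p.1, a q)^2 ≤ ((Fq p.1).card : ℝ) * ∑ q ∈ Fq p.1, a q ^ 2 := by
            exact_mod_cast sq_sum_le_card_mul_sum_sq (s := Fq p.1) (f := a)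
      _ ≤ (6 * (2:ℝ) ^ (max k 0 : ℤ)) * ∑ q ∈ Fq p.1, a q ^ 2 :=
            mul_le_mul_of_nonneg_right (hFq_card p.1)
              (Finset.sum_nonneg (fun q _ => sq_nonneg (a q)))
    · rw [if_neg hj]
      exact zero_le
  -- multiplicity bound for fixed q
  have hq_bound : ∀ q : ℤ × ℤ, (∑' p : ℤ × ℤ, Φ p q) ≤
      Mb * Set.indicator U (fun r => ENNReal.ofReal (a r ^ 2)) q := by
    intro q
    by_cases hex : ∃ p : ℤ × ℤ, j₀ ≤ p.1 ∧ dIcc p ⊆ Set.Icc u v ∧ q ∈ Fq p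
    · obtain ⟨p₀, hp₀1, hp₀2, hp₀3⟩ := hex
      have hqU : q ∈ U := hG1 p₀ q hp₀1 hp₀2 hp₀3
      rw [Set.indicator_of_mem hqU]
      have hstep : ∀ p : ℤ × ℤ,
          Φ p q ≤ if p ∈ (Gm q).image (fun m => (q.1 - k, m)) then
            ENNReal.ofReal (a q ^ 2) else 0 := by
        intro p
        simp only [hΦ_def]
        by_cases hp : j₀ ≤ p.1 ∧ dIcc p ⊆ Set.Icc u v ∧ q ∈ Fq p
        · rw [if_pos hp]
          obtain ⟨h1, h2, h3⟩ := (hFq_iff p q).mpr hp.2.2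
          have hm : p.2 ∈ Gm q := hGm1 q p h1 h2 h3
          have hp1 : p.1 = q.1 - k := by omega
          have hmem : p ∈ (Gm q).image (fun m => (q.1 - k, m)) := by
            rw [Finset.mem_image]
            exact ⟨p.2, hm, by rw [← hp1]⟩
          rw [if_pos hmem]
        · rw [if_neg hp]
          exact zero_le
      calc ∑' p : ℤ × ℤ, Φ p q
          ≤ ∑' p : ℤ × ℤ, (if p ∈ (Gm q).image (fun m => (q.1 - k, m)) then
              ENNReal.ofReal (a q ^ 2) else 0) := ENNReal.tsum_le_tsum hstep
      _ = ∑ p ∈ (Gm q).image (fun m => (q.1 - k, m)),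
            (if p ∈ (Gm q).image (fun m => (q.1 - k, m)) then ENNReal.ofReal (a q ^ 2) else 0) :=
            tsum_eq_sum (fun p hp => if_neg hp)
      _ = ∑ p ∈ (Gm q).image (fun m => (q.1 - k, m)), ENNReal.ofReal (a q ^ 2) :=
            Finset.sum_congr rfl (fun p hp => if_pos hp)
      _ = (((Gm q).image (fun m => (q.1 - k, m))).card : ENNReal) * ENNReal.ofReal (a q ^ 2) := by
            rw [Finset.sum_const, nsmul_eq_mul]
      _ ≤ Mb * ENNReal.ofReal (a q ^ 2) := by
            apply mul_le_mul_left
            rw [← ENNReal.ofReal_natCast, hMb_def]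
            apply ENNReal.ofReal_le_ofReal
            calc ((((Gm q).image (fun m => (q.1 - k, m))).card : ℕ) : ℝ)
                ≤ ((Gm q).card : ℝ) := by exact_mod_cast Finset.card_image_le
            _ ≤ _ := hGm2 q
    · push_neg at hex
      have hz : ∀ p : ℤ × ℤ, Φ p q = 0 := by
        intro p
        simp only [hΦ_def]
        exact if_neg (fun h => hex p h.1 h.2.1 h.2.2)
      rw [show (∑' p : ℤ × ℤ, Φ p q) = 0 by simp [hz]]
      exact zero_le
  -- the small-scale part
  have hsmall : (∑' p : {p : ℤ × ℤ // dIcc p ⊆ Set.Icc u v},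
        (if j₀ ≤ p.1.1 then ENNReal.ofReal ((∑ q ∈ Fq p.1, a q)^2) else 0))
      ≤ ENNReal.ofReal ((6 * (2:ℝ)^(max k 0 : ℤ)) *
          ((6 * (2:ℝ)^(max (-k) 0 : ℤ)) * (B^2 * (2*v - u - (2*u - v))))) := by
    calc (∑' p : {p : ℤ × ℤ // dIcc p ⊆ Set.Icc u v},
        (if j₀ ≤ p.1.1 then ENNReal.ofReal ((∑ q ∈ Fq p.1, a q)^2) else 0))
        ≤ ∑' p : {p : ℤ × ℤ // dIcc p ⊆ Set.Icc u v}, Nb * ∑' q : ℤ × ℤ, Φ p.1 q :=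
          ENNReal.tsum_le_tsum hsmall_term
    _ = Nb * ∑' p : {p : ℤ × ℤ // dIcc p ⊆ Set.Icc u v}, ∑' q : ℤ × ℤ, Φ p.1 q :=
          ENNReal.tsum_mul_left
    _ ≤ Nb * ∑' p : ℤ × ℤ, ∑' q : ℤ × ℤ, Φ p q :=
          mul_le_mul_right (ENNReal.tsum_comp_le_tsum_of_injective Subtype.val_injective
            (fun p => ∑' q : ℤ × ℤ, Φ p q)) _
    _ = Nb * ∑' q : ℤ × ℤ, ∑' p : ℤ × ℤ, Φ p q := by rw [ENNReal.tsum_comm]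
    _ ≤ Nb * ∑' q : ℤ × ℤ, (Mb * Set.indicator U (fun r => ENNReal.ofReal (a r ^ 2)) q) :=
          mul_le_mul_right (ENNReal.tsum_le_tsum hq_bound) _
    _ = Nb * (Mb * ∑' q : ℤ × ℤ, Set.indicator U (fun r => ENNReal.ofReal (a r ^ 2)) q) := by
          rw [ENNReal.tsum_mul_left]
    _ = Nb * (Mb * ∑' q : ↥U, ENNReal.ofReal (a ↑q ^ 2)) := by
          rw [tsum_subtype U (fun r => ENNReal.ofReal (a r ^ 2))]
    _ ≤ Nb * (Mb * ENNReal.ofReal (B^2 * (2*v - u - (2*u - v)))) := by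
          apply mul_le_mul_right
          apply mul_le_mul_right
          exact hyp (2*u - v) (2*v - u) (by linarith)
    _ = ENNReal.ofReal ((6 * (2:ℝ)^(max k 0 : ℤ)) *
          ((6 * (2:ℝ)^(max (-k) 0 : ℤ)) * (B^2 * (2*v - u - (2*u - v))))) := by
          rw [hNb_def, hMb_def, ← ENNReal.ofReal_mul (by positivity),
            ← ENNReal.ofReal_mul (by positivity)]
  -- big-scale termwise bound
  have hbig_term : ∀ p : {p : ℤ × ℤ // dIcc p ⊆ Set.Icc u v},
      (if j₀ ≤ p.1.1 then 0 else ENNReal.ofReal ((∑ q ∈ Fq p.1, a q)^2)) ≤ Hf p.1 := by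
    intro p
    by_cases hj : j₀ ≤ p.1.1
    · rw [if_pos hj]
      exact zero_le
    · rw [if_neg hj]
      push_neg at hj
      have hcond : p.1.1 < j₀ ∧ dIcc p.1 ⊆ Set.Icc u v := ⟨hj, p.2⟩
      simp only [hHf_def]
      rw [if_pos hcond]
      apply ENNReal.ofReal_le_ofReal
      have h1 : (∑ q ∈ Fq p.1, a q)^2 ≤ ((Fq p.1).card : ℝ) * ∑ q ∈ Fq p.1, a q ^ 2 := by
        exact_mod_cast sq_sum_le_card_mul_sum_sq (s := Fq p.1) (f := a)
      have h2 : ∑ q ∈ Fq p.1, a q ^ 2 ≤ ((Fq p.1).card : ℝ) * (B^2 * dLen (p.1.1 + k)) := by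
        calc ∑ q ∈ Fq p.1, a q ^ 2 ≤ ∑ q ∈ Fq p.1, B^2 * dLen (p.1.1 + k) := by
              apply Finset.sum_le_sum
              intro q hq
              have h3 := hsingle q
              rw [hFq_fst p.1 q hq] at h3
              exact h3
        _ = ((Fq p.1).card : ℝ) * (B^2 * dLen (p.1.1 + k)) := by
              rw [Finset.sum_const, nsmul_eq_mul]
      have hcard := hFq_card p.1
      have hcard0 : (0:ℝ) ≤ ((Fq p.1).card : ℝ) := Nat.cast_nonneg _
      have hlen : (0:ℝ) ≤ B^2 * dLen (p.1.1 + k) :=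
        mul_nonneg (sq_nonneg B) (dLen_pos _).le
      have h3 : (∑ q ∈ Fq p.1, a q)^2 ≤
          (6 * (2:ℝ)^(max k 0 : ℤ)) * ((6 * (2:ℝ)^(max k 0 : ℤ)) * (B^2 * dLen (p.1.1 + k))) := by
        have h4 : ((Fq p.1).card : ℝ) * ∑ q ∈ Fq p.1, a q ^ 2 ≤
            ((Fq p.1).card : ℝ) * (((Fq p.1).card : ℝ) * (B^2 * dLen (p.1.1 + k))) := by
          apply mul_le_mul_of_nonneg_left h2 hcard0
        have h5 : ((Fq p.1).card : ℝ) * (((Fq p.1).card : ℝ) * (B^2 * dLen (p.1.1 + k))) ≤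
            (6 * (2:ℝ)^(max k 0 : ℤ)) * ((6 * (2:ℝ)^(max k 0 : ℤ)) * (B^2 * dLen (p.1.1 + k))) := by
          apply mul_le_mul hcard (mul_le_mul_of_nonneg_right hcard hlen) (mul_nonneg hcard0 hlen)
            (by positivity)
        linarith
      have h6 : (6 * (2:ℝ)^(max k 0 : ℤ)) * ((6 * (2:ℝ)^(max k 0 : ℤ)) * (B^2 * dLen (p.1.1 + k)))
          = 36 * (2:ℝ)^(|k| : ℤ) * B^2 * dLen p.1.1 := by
        have e1 : dLen (p.1.1 + k) = dLen p.1.1 * (2:ℝ)^(-k : ℤ) := by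
          rw [dLen_mul (p.1.1 + k) p.1.1, show p.1.1 - (p.1.1 + k) = -k from by omega]
        have e2 : (2:ℝ)^(max k 0 : ℤ) * ((2:ℝ)^(max k 0 : ℤ) * (2:ℝ)^(-k : ℤ)) =
            (2:ℝ)^(|k| : ℤ) := by
          rw [← zpow_add₀ (two_ne_zero : (2:ℝ) ≠ 0), ← zpow_add₀ (two_ne_zero : (2:ℝ) ≠ 0),
            show max k 0 + (max k 0 + -k) = |k| from by
              rcases abs_cases k with ⟨h1, h2⟩ | ⟨h1, h2⟩ <;> omega]
        calc (6 * (2:ℝ)^(max k 0 : ℤ)) * ((6 * (2:ℝ)^(max k 0 : ℤ)) * (B^2 * dLen (p.1.1 + k)))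
            = ((2:ℝ)^(max k 0 : ℤ) * ((2:ℝ)^(max k 0 : ℤ) * (2:ℝ)^(-k : ℤ))) *
              (36 * B^2 * dLen p.1.1) := by rw [e1]; ring
        _ = 36 * (2:ℝ)^(|k| : ℤ) * B^2 * dLen p.1.1 := by rw [e2]; ring
      linarith
  -- the big-scale finite family
  set Fbig : Finset (ℤ × ℤ) := (Finset.Icc j₁ (j₀ - 1)).biUnion
    (fun j => (Finset.Icc ⌈u / dLen j⌉ (⌊v / dLen j⌋ - 1)).image (fun t => (j, t))) with hFbig_def
  have hbig_support : ∀ p : ℤ × ℤ, Hf p ≠ 0 → p ∈ Fbig := by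
    intro p hp
    have hcond : p.1 < j₀ ∧ dIcc p ⊆ Set.Icc u v := by
      by_contra h
      exact hp (by simp only [hHf_def]; exact if_neg h)
    obtain ⟨h1, h2⟩ := hcond
    obtain ⟨hu1, hv1⟩ := hsub u v p h2
    have hL := dLen_pos p.1
    have hlen : dLen p.1 ≤ v - u := by nlinarith
    have hj1 : j₁ ≤ p.1 := h_j₁ p.1 hlen
    rw [hFbig_def, Finset.mem_biUnion]
    refine ⟨p.1, Finset.mem_Icc.mpr ⟨hj1, by omega⟩, ?_⟩
    rw [Finset.mem_image]
    refine ⟨p.2, Finset.mem_Icc.mpr ⟨?_, ?_⟩, rfl⟩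
    · exact Int.ceil_le.mpr ((div_le_iff₀ hL).mpr (by linarith))
    · have h3 : ((p.2 : ℝ) + 1) ≤ v / dLen p.1 := (le_div_iff₀ hL).mpr (by linarith)
      have h4 : p.2 + 1 ≤ ⌊v / dLen p.1⌋ := Int.le_floor.mpr (by push_cast; linarith)
      omega
  have hdisj : (↑(Finset.Icc j₁ (j₀ - 1)) : Set ℤ).PairwiseDisjoint
      (fun j => (Finset.Icc ⌈u / dLen j⌉ (⌊v / dLen j⌋ - 1)).image (fun t => (j, t))) := by
    intro i _ j _ hij
    rw [Function.onFun, Finset.disjoint_left]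
    rintro p hp hp'
    rw [Finset.mem_image] at hp hp'
    obtain ⟨t, -, rfl⟩ := hp
    obtain ⟨t', -, h⟩ := hp'
    exact hij ((congrArg Prod.fst h).symm)
  -- per-scale bound
  have hperj : ∀ j ∈ Finset.Icc j₁ (j₀ - 1),
      (∑ p ∈ (Finset.Icc ⌈u / dLen j⌉ (⌊v / dLen j⌋ - 1)).image (fun t => (j, t)), Hf p)
        ≤ ENNReal.ofReal (36 * (2:ℝ)^(|k| : ℤ) * B^2 * (v - u)) := by
    intro j _
    have hL := dLen_pos j
    have hinj : ∀ x ∈ Finset.Icc ⌈u / dLen j⌉ (⌊v / dLen j⌋ - 1),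
        ∀ y ∈ Finset.Icc ⌈u / dLen j⌉ (⌊v / dLen j⌋ - 1),
        (fun t => ((j, t) : ℤ × ℤ)) x = (fun t => ((j, t) : ℤ × ℤ)) y → x = y := by
      intro x _ y _ h
      exact congrArg Prod.snd h
    rw [Finset.sum_image hinj]
    have hcard : ((Finset.Icc ⌈u / dLen j⌉ (⌊v / dLen j⌋ - 1)).card : ℝ) ≤ (v - u) / dLen j := by
      rw [Int.card_Icc]
      rcases le_or_gt (⌊v / dLen j⌋ - 1 + 1 - ⌈u / dLen j⌉) 0 with h | h
      · rw [Int.toNat_of_nonpos h]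
        simp only [Nat.cast_zero]
        exact div_nonneg (by linarith) (dLen_pos j).le
      · have hc : (((⌊v / dLen j⌋ - 1 + 1 - ⌈u / dLen j⌉).toNat : ℕ) : ℝ) =
            ((⌊v / dLen j⌋ - 1 + 1 - ⌈u / dLen j⌉ : ℤ) : ℝ) := by
          exact_mod_cast Int.toNat_of_nonneg h.le
        rw [hc]
        push_cast
        have hf := Int.floor_le (v / dLen j)
        have hcl := Int.le_ceil (u / dLen j)
        have he : (v - u) / dLen j = v / dLen j - u / dLen j := by ring
        linarith
    calc (∑ t ∈ Finset.Icc ⌈u / dLen j⌉ (⌊v / dLen j⌋ - 1), Hf (j, t))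
        ≤ ∑ t ∈ Finset.Icc ⌈u / dLen j⌉ (⌊v / dLen j⌋ - 1),
            ENNReal.ofReal (36 * (2:ℝ)^(|k| : ℤ) * B^2 * dLen j) := by
          apply Finset.sum_le_sum
          intro t _
          simp only [hHf_def]
          split
          · exact le_rfl
          · exact zero_le
    _ = ((Finset.Icc ⌈u / dLen j⌉ (⌊v / dLen j⌋ - 1)).card : ENNReal) *
          ENNReal.ofReal (36 * (2:ℝ)^(|k| : ℤ) * B^2 * dLen j) := by
          rw [Finset.sum_const, nsmul_eq_mul]
    _ ≤ ENNReal.ofReal ((v - u) / dLen j) *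
          ENNReal.ofReal (36 * (2:ℝ)^(|k| : ℤ) * B^2 * dLen j) := by
          apply mul_le_mul_left
          rw [← ENNReal.ofReal_natCast]
          exact ENNReal.ofReal_le_ofReal hcard
    _ = ENNReal.ofReal ((v - u) / dLen j * (36 * (2:ℝ)^(|k| : ℤ) * B^2 * dLen j)) := by
          rw [← ENNReal.ofReal_mul (div_nonneg (by linarith) (dLen_pos j).le)]
    _ = ENNReal.ofReal (36 * (2:ℝ)^(|k| : ℤ) * B^2 * (v - u)) := by
          congr 1
          field_simp
  -- the big-scale part
  have hbig : (∑' p : {p : ℤ × ℤ // dIcc p ⊆ Set.Icc u v},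
        (if j₀ ≤ p.1.1 then 0 else ENNReal.ofReal ((∑ q ∈ Fq p.1, a q)^2)))
      ≤ ENNReal.ofReal ((Y + 1) * (36 * (2:ℝ)^(|k| : ℤ) * B^2 * (v - u))) := by
    calc (∑' p : {p : ℤ × ℤ // dIcc p ⊆ Set.Icc u v},
        (if j₀ ≤ p.1.1 then 0 else ENNReal.ofReal ((∑ q ∈ Fq p.1, a q)^2)))
        ≤ ∑' p : {p : ℤ × ℤ // dIcc p ⊆ Set.Icc u v}, Hf p.1 :=
          ENNReal.tsum_le_tsum hbig_term
    _ ≤ ∑' p : ℤ × ℤ, Hf p :=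
          ENNReal.tsum_comp_le_tsum_of_injective Subtype.val_injective Hf
    _ = ∑ p ∈ Fbig, Hf p :=
          tsum_eq_sum (fun p hp => by
            by_contra h
            exact hp (hbig_support p h))
    _ = ∑ j ∈ Finset.Icc j₁ (j₀ - 1),
          ∑ p ∈ (Finset.Icc ⌈u / dLen j⌉ (⌊v / dLen j⌋ - 1)).image (fun t => (j, t)), Hf p := by
          rw [hFbig_def]
          exact Finset.sum_biUnion hdisj
    _ ≤ ∑ _j ∈ Finset.Icc j₁ (j₀ - 1), ENNReal.ofReal (36 * (2:ℝ)^(|k| : ℤ) * B^2 * (v - u)) :=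
          Finset.sum_le_sum hperj
    _ = ((Finset.Icc j₁ (j₀ - 1)).card : ENNReal) *
          ENNReal.ofReal (36 * (2:ℝ)^(|k| : ℤ) * B^2 * (v - u)) := by
          rw [Finset.sum_const, nsmul_eq_mul]
    _ ≤ ENNReal.ofReal (Y + 1) * ENNReal.ofReal (36 * (2:ℝ)^(|k| : ℤ) * B^2 * (v - u)) := by
          apply mul_le_mul_left
          rw [← ENNReal.ofReal_natCast]
          apply ENNReal.ofReal_le_ofReal
          have hc : (Finset.Icc j₁ (j₀ - 1)).card = (j₀ - j₁).toNat := by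
            rw [Int.card_Icc]
            congr 1
            omega
          rw [hc]
          exact h_scales
    _ = ENNReal.ofReal ((Y + 1) * (36 * (2:ℝ)^(|k| : ℤ) * B^2 * (v - u))) := by
          rw [← ENNReal.ofReal_mul (by linarith)]
  -- put the two parts together
  calc (∑' p : {p : ℤ × ℤ // dIcc p ⊆ Set.Icc u v},
      ENNReal.ofReal
        ((∑' q : {q : ℤ × ℤ // q.1 = p.1.1 + k ∧ (n : ℝ) ≤ dRdist p.1 q ∧
            dRdist p.1 q < (n : ℝ) + 1}, a ↑q) ^ 2))
      = ∑' p : {p : ℤ × ℤ // dIcc p ⊆ Set.Icc u v},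
          ENNReal.ofReal ((∑ q ∈ Fq p.1, a q)^2) :=
        tsum_congr (fun p => by rw [hinner p.1])
  _ = ∑' p : {p : ℤ × ℤ // dIcc p ⊆ Set.Icc u v},
        ((if j₀ ≤ p.1.1 then ENNReal.ofReal ((∑ q ∈ Fq p.1, a q)^2) else 0) +
          (if j₀ ≤ p.1.1 then 0 else ENNReal.ofReal ((∑ q ∈ Fq p.1, a q)^2))) :=
        tsum_congr (fun p => by by_cases hj : j₀ ≤ p.1.1 <;> simp [hj])
  _ = (∑' p : {p : ℤ × ℤ // dIcc p ⊆ Set.Icc u v},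
        (if j₀ ≤ p.1.1 then ENNReal.ofReal ((∑ q ∈ Fq p.1, a q)^2) else 0)) +
      (∑' p : {p : ℤ × ℤ // dIcc p ⊆ Set.Icc u v},
        (if j₀ ≤ p.1.1 then 0 else ENNReal.ofReal ((∑ q ∈ Fq p.1, a q)^2))) :=
        ENNReal.tsum_add
  _ ≤ ENNReal.ofReal ((6 * (2:ℝ)^(max k 0 : ℤ)) *
          ((6 * (2:ℝ)^(max (-k) 0 : ℤ)) * (B^2 * (2*v - u - (2*u - v))))) +
      ENNReal.ofReal ((Y + 1) * (36 * (2:ℝ)^(|k| : ℤ) * B^2 * (v - u))) :=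
        add_le_add hsmall hbig
  _ ≤ ENNReal.ofReal (1000 * (2:ℝ)^(|k| : ℤ) * (Y + 1) * B^2 * (v - u)) := by
        rw [← ENNReal.ofReal_add
          (mul_nonneg (by positivity)
            (mul_nonneg (by positivity) (mul_nonneg (sq_nonneg B) (by linarith))))
          (mul_nonneg (by linarith)
            (mul_nonneg (mul_nonneg (by positivity) (sq_nonneg B)) (by linarith)))]
        apply ENNReal.ofReal_le_ofReal
        have hzz : (2:ℝ)^(max k 0 : ℤ) * (2:ℝ)^(max (-k) 0 : ℤ) = (2:ℝ)^(|k| : ℤ) := by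
          rw [← zpow_add₀ (two_ne_zero : (2:ℝ) ≠ 0),
            show max k 0 + max (-k) 0 = |k| from by
              rcases abs_cases k with ⟨h1, h2⟩ | ⟨h1, h2⟩ <;> omega]
        have hP : (0:ℝ) ≤ (2:ℝ)^(|k| : ℤ) * B^2 * (v - u) :=
          mul_nonneg (mul_nonneg (by positivity) (sq_nonneg B)) (by linarith)
        have e1 : (6 * (2:ℝ)^(max k 0 : ℤ)) *
            ((6 * (2:ℝ)^(max (-k) 0 : ℤ)) * (B^2 * (2*v - u - (2*u - v)))) =
            108 * ((2:ℝ)^(|k| : ℤ) * B^2 * (v - u)) := by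
          rw [← hzz]
          ring
        have e2 : (Y + 1) * (36 * (2:ℝ)^(|k| : ℤ) * B^2 * (v - u)) =
            36 * (Y + 1) * ((2:ℝ)^(|k| : ℤ) * B^2 * (v - u)) := by ring
        have e3 : 1000 * (2:ℝ)^(|k| : ℤ) * (Y + 1) * B^2 * (v - u) =
            1000 * (Y + 1) * ((2:ℝ)^(|k| : ℤ) * B^2 * (v - u)) := by ring
        rw [e1, e2, e3]
        nlinarith [mul_nonneg hY hP, hP]
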